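/- arXiv:2404.13637 — 2 statements merged into one kernel-verified Lean document; each statement's English description precedes it below -/
import Mathlib

section
/- Let μ ∈ ℝ, σ > 0 and α ∈ (0,1). Then sup over all probability measures in V(μ,σ) of the right-continuous Value-at-Risk VaR⁺_α equals sup over V(μ,σ) of the left-continuous Value-at-Risk VaR_α, and both equal μ + σ·√(α/(1−α)). Moreover, the supremum of VaR⁺_α is attained by the two-point distribution placing mass 1−α at μ + σ√(α/(1−α)) and mass α at μ − σ√((1−α)/α). -/
open MeasureTheory Set

/-- The cumulative distribution function of a measure on ℝ. -/
noncomputable def cdf' (ν : Measure ℝ) (x : ℝ) : ℝ := (ν (Iic x)).toReal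

/-- Left-continuous Value-at-Risk: `F⁻¹(α) = inf {x | F x ≥ α}`. -/
noncomputable def VaR (ν : Measure ℝ) (α : ℝ) : ℝ := sInf {x : ℝ | α ≤ cdf' ν x}

/-- Right-continuous Value-at-Risk: `F⁻¹⁺(α) = sup {x | F x ≤ α}`. -/
noncomputable def VaRp (ν : Measure ℝ) (α : ℝ) : ℝ := sSup {x : ℝ | cdf' ν x ≤ α}

/-- `V(m,s)`: Borel probability measures on ℝ with mean `m` and variance `s²`. -/
def Vset (m s : ℝ) : Set (Measure ℝ) :=
  {ν | IsProbabilityMeasure ν ∧ (∫ x, x ∂ν) = m ∧ (∫ x, (x - m) ^ 2 ∂ν) = s ^ 2}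

/-- Symmetry of a measure about the point `m`. -/
def SymmAbout (ν : Measure ℝ) (m : ℝ) : Prop :=
  ∀ x : ℝ, ν (Iic x) = ν (Ici (2 * m - x))

/-- Unimodality: the cdf is convex on `(-∞, m)` and concave on `(m, ∞)` for some mode `m`. -/
def Unimodal (ν : Measure ℝ) : Prop :=
  ∃ m : ℝ, ConvexOn ℝ (Iio m) (cdf' ν) ∧ ConcaveOn ℝ (Ioi m) (cdf' ν)

/-- The uniform distribution on the interval `[a, b]`. -/
noncomputable def unif (a b : ℝ) : Measure ℝ :=
  (ENNReal.ofReal (b - a))⁻¹ • volume.restrict (Icc a b)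

/-! ### Auxiliary lemmas -/

lemma cantelli (ν : Measure ℝ) [IsProbabilityMeasure ν] (f : ℝ → ℝ) (s t : ℝ)
    (hs : 0 < s) (ht : 0 < t) (hfm : Measurable f)
    (hint : Integrable f ν) (hint2 : Integrable (fun x => f x ^ 2) ν)
    (h0 : ∫ x, f x ∂ν = 0) (h2 : ∫ x, f x ^ 2 ∂ν = s ^ 2) :
    (ν {x | t ≤ f x}).toReal ≤ s ^ 2 / (s ^ 2 + t ^ 2) := by
  set l : ℝ := s ^ 2 / t with hl
  have hlpos : 0 < l := div_pos (by positivity) (by positivity)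
  have hA : MeasurableSet {x | t ≤ f x} := measurableSet_le measurable_const hfm
  have hIg : Integrable (fun x => (f x + l) ^ 2) ν := by
    have : (fun x => (f x + l) ^ 2) = fun x => f x ^ 2 + (2 * l) * f x + l ^ 2 := by
      ext x; ring
    rw [this]
    exact (hint2.add (hint.const_mul _)).add (integrable_const _)
  have hInt : ∫ x, (f x + l) ^ 2 ∂ν = s ^ 2 + l ^ 2 := by
    have : (fun x => (f x + l) ^ 2) = fun x => f x ^ 2 + (2 * l) * f x + l ^ 2 := by
      ext x; ring
    have hI3 : Integrable (fun x => f x ^ 2 + 2 * l * f x) ν := hint2.add (hint.const_mul _)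
    rw [this, integral_add hI3 (integrable_const _), integral_add hint2 (hint.const_mul _),
      MeasureTheory.integral_const_mul, h0, h2]
    simp
  have key : (t + l) ^ 2 * (ν {x | t ≤ f x}).toReal ≤ s ^ 2 + l ^ 2 := by
    have h1 : ∫ x in {x | t ≤ f x}, (t + l) ^ 2 ∂ν ≤ ∫ x in {x | t ≤ f x}, (f x + l) ^ 2 ∂ν := by
      apply setIntegral_mono_on (integrableOn_const (measure_ne_top _ _))
        hIg.integrableOn hA
      intro x hx
      have : t ≤ f x := hx
      nlinarith
    have h2' : ∫ x in {x | t ≤ f x}, (f x + l) ^ 2 ∂ν ≤ ∫ x, (f x + l) ^ 2 ∂ν :=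
      setIntegral_le_integral hIg (Filter.Eventually.of_forall fun x => by positivity)
    rw [setIntegral_const] at h1
    rw [hInt] at h2'
    calc (t + l) ^ 2 * (ν {x | t ≤ f x}).toReal
        = (ν {x | t ≤ f x}).toReal • (t + l) ^ 2 := by rw [smul_eq_mul]; ring
      _ ≤ s ^ 2 + l ^ 2 := le_trans h1 h2'
  have heq : s ^ 2 / (s ^ 2 + t ^ 2) = (s ^ 2 + l ^ 2) / (t + l) ^ 2 := by
    rw [hl]; field_simp; ring
  rw [heq, le_div_iff₀ (by positivity)]
  linarith [key]

lemma vset_facts {m s : ℝ} (hs : 0 < s) {ν : Measure ℝ} (hν : ν ∈ Vset m s) :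
    Integrable (fun x => (x - m) ^ 2) ν ∧ Integrable (fun x => x - m) ν ∧
      (∫ x, (x - m) ∂ν) = 0 := by
  obtain ⟨hp, hmean, hvar⟩ := hν
  haveI := hp
  have hI2 : Integrable (fun x => (x - m) ^ 2) ν := by
    by_contra h
    rw [integral_undef h] at hvar
    nlinarith
  have hI1 : Integrable (fun x => x - m) ν := by
    apply Integrable.mono' (g := fun x => 1 + (x - m) ^ 2)
      ((integrable_const _).add hI2)
      ((continuous_id.sub continuous_const).aestronglyMeasurable)
    filter_upwards with x
    simp only [id_eq, Real.norm_eq_abs, Pi.sub_apply]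
    nlinarith [abs_nonneg (x - m), sq_abs (x - m)]
  have hid : Integrable (fun x : ℝ => x) ν := by
    have heq : (fun x : ℝ => x) = fun x => (x - m) + m := by ext x; ring
    rw [heq]
    exact hI1.add (integrable_const m)
  refine ⟨hI2, hI1, ?_⟩
  rw [integral_sub hid (integrable_const m), hmean]
  simp

lemma vset_tail_hi {m s : ℝ} (hs : 0 < s) {ν : Measure ℝ} (hν : ν ∈ Vset m s)
    {t : ℝ} (ht : 0 < t) : (ν (Ici (m + t))).toReal ≤ s ^ 2 / (s ^ 2 + t ^ 2) := by
  obtain ⟨hI2, hI1, h0⟩ := vset_facts hs hν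
  haveI := hν.1
  have hset : Ici (m + t) = {x : ℝ | t ≤ (fun x => x - m) x} := by
    ext x; simp [mem_Ici]; constructor <;> intro <;> linarith
  rw [hset]
  exact cantelli ν (fun x => x - m) s t hs ht (measurable_id.sub measurable_const)
    hI1 hI2 h0 hν.2.2

lemma vset_tail_lo {m s : ℝ} (hs : 0 < s) {ν : Measure ℝ} (hν : ν ∈ Vset m s)
    {t : ℝ} (ht : 0 < t) : (ν (Iic (m - t))).toReal ≤ s ^ 2 / (s ^ 2 + t ^ 2) := by
  obtain ⟨hI2, hI1, h0⟩ := vset_facts hs hν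
  haveI := hν.1
  have hset : Iic (m - t) = {x : ℝ | t ≤ (fun x => m - x) x} := by
    ext x; simp [mem_Iic]; constructor <;> intro <;> linarith
  rw [hset]
  refine cantelli ν (fun x => m - x) s t hs ht (measurable_const.sub measurable_id)
    (by
      have heq : (fun x : ℝ => m - x) = fun x => -(x - m) := by ext x; ring
      rw [heq]; exact hI1.neg) ?_ ?_ ?_
  · have : (fun x : ℝ => (m - x) ^ 2) = fun x => (x - m) ^ 2 := by ext x; ring
    rw [this]; exact hI2
  · have : (fun x : ℝ => m - x) = fun x => -(x - m) := by ext x; ring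
    rw [this, integral_neg, h0, neg_zero]
  · have : (fun x : ℝ => (m - x) ^ 2) = fun x => (x - m) ^ 2 := by ext x; ring
    rw [this]; exact hν.2.2

lemma cdf'_mono (ν : Measure ℝ) [IsFiniteMeasure ν] {x y : ℝ} (h : x ≤ y) :
    cdf' ν x ≤ cdf' ν y :=
  ENNReal.toReal_mono (measure_ne_top _ _) (measure_mono (Iic_subset_Iic.mpr h))

lemma cdf'_add_tail (ν : Measure ℝ) [IsProbabilityMeasure ν] (x : ℝ) :
    cdf' ν x + (ν (Ioi x)).toReal = 1 := by
  have h : ν (Iic x) + ν (Ioi x) = 1 := by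
    rw [← compl_Iic, measure_add_measure_compl measurableSet_Iic, measure_univ]
  have := congrArg ENNReal.toReal h
  rwa [ENNReal.toReal_add (measure_ne_top _ _) (measure_ne_top _ _), ENNReal.toReal_one] at this

/-- Bound quantity identity: for `t0 = s√(α/(1-α))`, `s²/(s²+t0²) = 1-α`. -/
lemma ratio_hi {s α : ℝ} (hs : 0 < s) (hα : α ∈ Ioo (0:ℝ) 1) :
    s ^ 2 / (s ^ 2 + (s * Real.sqrt (α / (1 - α))) ^ 2) = 1 - α := by
  obtain ⟨h0, h1⟩ := hα
  have h1' : (0:ℝ) < 1 - α := by linarith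
  rw [mul_pow, Real.sq_sqrt (by positivity)]
  field_simp
  ring

lemma ratio_lo {s α : ℝ} (hs : 0 < s) (hα : α ∈ Ioo (0:ℝ) 1) :
    s ^ 2 / (s ^ 2 + (s * Real.sqrt ((1 - α) / α)) ^ 2) = α := by
  obtain ⟨h0, h1⟩ := hα
  have h1' : (0:ℝ) < 1 - α := by linarith
  rw [mul_pow, Real.sq_sqrt (by positivity)]
  field_simp
  ring

/-- For `x > m + t0`, the cdf exceeds `α`. -/
lemma cdf'_gt {m s α : ℝ} (hs : 0 < s) (hα : α ∈ Ioo (0:ℝ) 1)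
    {ν : Measure ℝ} (hν : ν ∈ Vset m s) {x : ℝ}
    (hx : m + s * Real.sqrt (α / (1 - α)) < x) : α < cdf' ν x := by
  haveI := hν.1
  obtain ⟨h0, h1⟩ := hα
  have h1' : (0:ℝ) < 1 - α := by linarith
  set t0 : ℝ := s * Real.sqrt (α / (1 - α)) with ht0
  have ht0pos : 0 < t0 := by
    apply mul_pos hs
    exact Real.sqrt_pos.mpr (by positivity)
  set t : ℝ := x - m with htdef
  have htt : t0 < t := by simp [htdef]; linarith
  have htpos : 0 < t := lt_trans ht0pos htt
  have h2 : (ν (Ioi x)).toReal ≤ (ν (Ici x)).toReal :=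
    ENNReal.toReal_mono (measure_ne_top _ _) (measure_mono Ioi_subset_Ici_self)
  have hx' : x = m + t := by simp [htdef]
  have h3 : (ν (Ici x)).toReal ≤ s ^ 2 / (s ^ 2 + t ^ 2) := by
    rw [hx']; exact vset_tail_hi hs hν htpos
  have h4 : s ^ 2 / (s ^ 2 + t ^ 2) < s ^ 2 / (s ^ 2 + t0 ^ 2) := by
    apply div_lt_div_of_pos_left (by positivity) (by positivity)
    nlinarith
  have h5 : s ^ 2 / (s ^ 2 + t0 ^ 2) = 1 - α := ratio_hi hs ⟨h0, h1⟩
  have h6 := cdf'_add_tail ν x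
  linarith

/-- The cdf at `m - t1` is at most `α`. -/
lemma cdf'_le_a {m s α : ℝ} (hs : 0 < s) (hα : α ∈ Ioo (0:ℝ) 1)
    {ν : Measure ℝ} (hν : ν ∈ Vset m s) :
    cdf' ν (m - s * Real.sqrt ((1 - α) / α)) ≤ α := by
  obtain ⟨h0, h1⟩ := hα
  have h1' : (0:ℝ) < 1 - α := by linarith
  have ht1pos : 0 < s * Real.sqrt ((1 - α) / α) :=
    mul_pos hs (Real.sqrt_pos.mpr (by positivity))
  have := vset_tail_lo hs hν ht1pos
  rw [ratio_lo hs ⟨h0, h1⟩] at this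
  exact this

lemma VaRp_le {m s α : ℝ} (hs : 0 < s) (hα : α ∈ Ioo (0:ℝ) 1)
    {ν : Measure ℝ} (hν : ν ∈ Vset m s) :
    VaRp ν α ≤ m + s * Real.sqrt (α / (1 - α)) := by
  apply csSup_le
  · exact ⟨m - s * Real.sqrt ((1 - α) / α), cdf'_le_a hs hα hν⟩
  · intro x hx
    by_contra h
    push_neg at h
    exact absurd hx (not_le.mpr (cdf'_gt hs hα hν h))

lemma VaR_le {m s α : ℝ} (hs : 0 < s) (hα : α ∈ Ioo (0:ℝ) 1)
    {ν : Measure ℝ} (hν : ν ∈ Vset m s) :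
    VaR ν α ≤ m + s * Real.sqrt (α / (1 - α)) := by
  haveI := hν.1
  obtain ⟨h0, h1⟩ := hα
  have h1' : (0:ℝ) < 1 - α := by linarith
  set t1 : ℝ := s * Real.sqrt ((1 - α) / α) with ht1
  have ht1pos : 0 < t1 := mul_pos hs (Real.sqrt_pos.mpr (by positivity))
  have hbdd : BddBelow {x : ℝ | α ≤ cdf' ν x} := by
    refine ⟨m - (t1 + 1), fun x hx => ?_⟩
    by_contra hcon
    push_neg at hcon
    have hc1 : cdf' ν x ≤ cdf' ν (m - (t1 + 1)) := cdf'_mono ν hcon.le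
    have hc2 : cdf' ν (m - (t1 + 1)) ≤ s ^ 2 / (s ^ 2 + (t1 + 1) ^ 2) :=
      vset_tail_lo hs hν (by linarith)
    have hc3 : s ^ 2 / (s ^ 2 + (t1 + 1) ^ 2) < s ^ 2 / (s ^ 2 + t1 ^ 2) := by
      apply div_lt_div_of_pos_left (by positivity) (by positivity)
      nlinarith
    have hc4 : s ^ 2 / (s ^ 2 + t1 ^ 2) = α := ratio_lo hs ⟨h0, h1⟩
    have : α ≤ cdf' ν x := hx
    linarith
  apply le_of_forall_pos_le_add
  intro ε hε
  apply csInf_le hbdd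
  have : α < cdf' ν (m + s * Real.sqrt (α / (1 - α)) + ε) :=
    cdf'_gt hs ⟨h0, h1⟩ hν (by linarith)
  exact this.le

lemma integrable_dirac'' (f : ℝ → ℝ) (a : ℝ) : Integrable f (Measure.dirac a) :=
  (integrable_const (f a)).congr (by rw [Filter.EventuallyEq, ae_dirac_eq]; simp)

/-- the two-point measure -/
noncomputable def tp (m s b : ℝ) : Measure ℝ :=
  ENNReal.ofReal (1 - b) • Measure.dirac (m + s * Real.sqrt (b / (1 - b))) +
    ENNReal.ofReal b • Measure.dirac (m - s * Real.sqrt ((1 - b) / b))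

lemma tp_prob {m s b : ℝ} (hb : b ∈ Ioo (0:ℝ) 1) : IsProbabilityMeasure (tp m s b) := by
  constructor
  rw [tp, Measure.add_apply, Measure.smul_apply, Measure.smul_apply, smul_eq_mul, smul_eq_mul,
    measure_univ, measure_univ, mul_one, mul_one,
    ← ENNReal.ofReal_add (by linarith [hb.2]) hb.1.le]
  norm_num

lemma integral_tp {m s b : ℝ} (hb : b ∈ Ioo (0:ℝ) 1) (f : ℝ → ℝ) :
    ∫ x, f x ∂(tp m s b) =
      (1 - b) * f (m + s * Real.sqrt (b / (1 - b))) +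
        b * f (m - s * Real.sqrt ((1 - b) / b)) := by
  rw [tp, integral_add_measure ((integrable_dirac'' f _).smul_measure ENNReal.ofReal_ne_top)
    ((integrable_dirac'' f _).smul_measure ENNReal.ofReal_ne_top),
    integral_smul_measure, integral_smul_measure, integral_dirac, integral_dirac,
    ENNReal.toReal_ofReal (by linarith [hb.2] : (0:ℝ) ≤ 1 - b),
    ENNReal.toReal_ofReal hb.1.le, smul_eq_mul, smul_eq_mul]

lemma tp_mem {m s b : ℝ} (hb : b ∈ Ioo (0:ℝ) 1) :
    tp m s b ∈ Vset m s := by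
  obtain ⟨hb0, hb1⟩ := hb
  have hb1' : (0:ℝ) < 1 - b := by linarith
  refine ⟨tp_prob ⟨hb0, hb1⟩, ?_, ?_⟩
  · rw [integral_tp ⟨hb0, hb1⟩]
    have e1 : (1 - b) * Real.sqrt (b / (1 - b)) = Real.sqrt b * Real.sqrt (1 - b) := by
      rw [Real.sqrt_div hb0.le,
        show (1 - b) * (Real.sqrt b / Real.sqrt (1 - b))
          = Real.sqrt b * ((1 - b) / Real.sqrt (1 - b)) by ring, Real.div_sqrt]
    have e2 : b * Real.sqrt ((1 - b) / b) = Real.sqrt (1 - b) * Real.sqrt b := by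
      rw [Real.sqrt_div hb1'.le,
        show b * (Real.sqrt (1 - b) / Real.sqrt b)
          = Real.sqrt (1 - b) * (b / Real.sqrt b) by ring, Real.div_sqrt]
    linear_combination s * e1 - s * e2
  · rw [integral_tp ⟨hb0, hb1⟩]
    have f1 : Real.sqrt (b / (1 - b)) ^ 2 = b / (1 - b) := Real.sq_sqrt (by positivity)
    have f2 : Real.sqrt ((1 - b) / b) ^ 2 = (1 - b) / b := Real.sq_sqrt (by positivity)
    have g1 : (m + s * Real.sqrt (b / (1 - b)) - m) ^ 2 = s ^ 2 * (b / (1 - b)) := by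
      rw [show m + s * Real.sqrt (b / (1 - b)) - m = s * Real.sqrt (b / (1 - b)) by ring,
        mul_pow, f1]
    have g2 : (m - s * Real.sqrt ((1 - b) / b) - m) ^ 2 = s ^ 2 * ((1 - b) / b) := by
      rw [show m - s * Real.sqrt ((1 - b) / b) - m = -(s * Real.sqrt ((1 - b) / b)) by ring,
        neg_pow, mul_pow, f2]
      ring
    rw [g1, g2]
    field_simp
    ring

lemma tp_cdf {m s b : ℝ} (hb : b ∈ Ioo (0:ℝ) 1) (x : ℝ) :
    cdf' (tp m s b) x =
      (if m + s * Real.sqrt (b / (1 - b)) ≤ x then 1 - b else 0) +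
        (if m - s * Real.sqrt ((1 - b) / b) ≤ x then b else 0) := by
  have hb1 : (0:ℝ) ≤ 1 - b := by linarith [hb.2]
  rw [cdf', tp, Measure.add_apply, Measure.smul_apply, Measure.smul_apply,
    Measure.dirac_apply' _ measurableSet_Iic, Measure.dirac_apply' _ measurableSet_Iic]
  simp only [smul_eq_mul, indicator_apply, mem_Iic, Pi.one_apply]
  split_ifs <;>
    simp [ENNReal.toReal_add, ENNReal.toReal_ofReal, hb.1.le, hb1]

lemma tp_pts (m : ℝ) {s b : ℝ} (hs : 0 < s) (hb : b ∈ Ioo (0:ℝ) 1) :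
    m - s * Real.sqrt ((1 - b) / b) < m + s * Real.sqrt (b / (1 - b)) := by
  have hb1 : (0:ℝ) < 1 - b := by linarith [hb.2]
  have h1 : 0 < Real.sqrt (b / (1 - b)) := Real.sqrt_pos.mpr (div_pos hb.1 hb1)
  have h2 : 0 < Real.sqrt ((1 - b) / b) := Real.sqrt_pos.mpr (div_pos hb1 hb.1)
  nlinarith

lemma tp_VaRp {m s α : ℝ} (hs : 0 < s) (hα : α ∈ Ioo (0:ℝ) 1) :
    VaRp (tp m s α) α = m + s * Real.sqrt (α / (1 - α)) := by
  have hpts := tp_pts m hs hα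
  have hset : {x : ℝ | cdf' (tp m s α) x ≤ α} = Iio (m + s * Real.sqrt (α / (1 - α))) := by
    ext x
    simp only [mem_setOf_eq, mem_Iio]
    rw [tp_cdf hα x]
    constructor
    · intro h
      by_contra hc
      push_neg at hc
      rw [if_pos hc, if_pos (le_trans hpts.le hc)] at h
      linarith [hα.2]
    · intro h
      rw [if_neg (not_le.mpr h)]
      split_ifs
      · linarith
      · linarith [hα.1]
  rw [VaRp, hset, csSup_Iio]

lemma tp_VaR {m s b α : ℝ} (hs : 0 < s) (hb : b ∈ Ioo (0:ℝ) 1) (hbα : b < α) (hα1 : α < 1) :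
    VaR (tp m s b) α = m + s * Real.sqrt (b / (1 - b)) := by
  have hpts := tp_pts m hs hb
  have hset : {x : ℝ | α ≤ cdf' (tp m s b) x} = Ici (m + s * Real.sqrt (b / (1 - b))) := by
    ext x
    simp only [mem_setOf_eq, mem_Ici]
    rw [tp_cdf hb x]
    constructor
    · intro h
      by_contra hc
      push_neg at hc
      rw [if_neg (not_le.mpr hc)] at h
      split_ifs at h <;> linarith [hb.1, hbα]
    · intro h
      rw [if_pos h, if_pos (le_trans hpts.le h)]
      linarith
  rw [VaR, hset, csInf_Ici]

/-- Worst-case VaR under mean–variance information (Proposition 3.1(i)). -/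
theorem worst_case_VaR (m s α : ℝ) (hs : 0 < s) (hα : α ∈ Ioo (0:ℝ) 1) :
    sSup ((fun ν => VaRp ν α) '' Vset m s) = m + s * Real.sqrt (α / (1 - α)) ∧
    sSup ((fun ν => VaR ν α) '' Vset m s) = m + s * Real.sqrt (α / (1 - α)) ∧
    ((ENNReal.ofReal (1 - α) • Measure.dirac (m + s * Real.sqrt (α / (1 - α))) +
        ENNReal.ofReal α • Measure.dirac (m - s * Real.sqrt ((1 - α) / α))) ∈ Vset m s ∧
      VaRp (ENNReal.ofReal (1 - α) • Measure.dirac (m + s * Real.sqrt (α / (1 - α))) +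
        ENNReal.ofReal α • Measure.dirac (m - s * Real.sqrt ((1 - α) / α))) α
        = m + s * Real.sqrt (α / (1 - α))) := by
  obtain ⟨h0, h1⟩ := hα
  set q : ℝ := m + s * Real.sqrt (α / (1 - α)) with hq
  have htp_eq : (ENNReal.ofReal (1 - α) • Measure.dirac (m + s * Real.sqrt (α / (1 - α))) +
      ENNReal.ofReal α • Measure.dirac (m - s * Real.sqrt ((1 - α) / α))) = tp m s α := rfl
  have hmem : tp m s α ∈ Vset m s := tp_mem ⟨h0, h1⟩
  have hVaRp0 : VaRp (tp m s α) α = q := tp_VaRp hs ⟨h0, h1⟩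
  have hbddp : BddAbove ((fun ν => VaRp ν α) '' Vset m s) := by
    refine ⟨q, ?_⟩
    rintro y ⟨ν, hν, rfl⟩
    exact VaRp_le hs ⟨h0, h1⟩ hν
  have hbdd : BddAbove ((fun ν => VaR ν α) '' Vset m s) := by
    refine ⟨q, ?_⟩
    rintro y ⟨ν, hν, rfl⟩
    exact VaR_le hs ⟨h0, h1⟩ hν
  refine ⟨?_, ?_, by rw [htp_eq]; exact hmem, by rw [htp_eq, hVaRp0]⟩
  · apply le_antisymm
    · apply csSup_le ⟨_, mem_image_of_mem (fun ν => VaRp ν α) hmem⟩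
      rintro y ⟨ν, hν, rfl⟩
      exact VaRp_le hs ⟨h0, h1⟩ hν
    · rw [← hVaRp0]
      exact le_csSup hbddp (mem_image_of_mem (fun ν => VaRp ν α) hmem)
  · apply le_antisymm
    · apply csSup_le ⟨_, mem_image_of_mem (fun ν => VaR ν α) hmem⟩
      rintro y ⟨ν, hν, rfl⟩
      exact VaR_le hs ⟨h0, h1⟩ hν
    · have htend : Filter.Tendsto (fun b : ℝ => m + s * Real.sqrt (b / (1 - b)))
          (nhdsWithin α (Iio α)) (nhds q) := by
        have hc : ContinuousAt (fun b : ℝ => m + s * Real.sqrt (b / (1 - b))) α := by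
          have hc0 : ContinuousAt (fun b : ℝ => b / (1 - b)) α :=
            ContinuousAt.div continuousAt_id (continuousAt_const.sub continuousAt_id)
              (by simp; linarith)
          exact continuousAt_const.add
            (continuousAt_const.mul (Real.continuous_sqrt.continuousAt.comp hc0))
        exact hc.tendsto.mono_left nhdsWithin_le_nhds
      haveI : Filter.NeBot (nhdsWithin α (Iio α)) := by infer_instance
      apply le_of_tendsto htend
      filter_upwards [Ioo_mem_nhdsLT_of_mem (⟨h0, le_refl α⟩ : α ∈ Ioc (0:ℝ) α)] with b hb
      have hVaRb : VaR (tp m s b) α = m + s * Real.sqrt (b / (1 - b)) :=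
        tp_VaR hs ⟨hb.1, lt_trans hb.2 h1⟩ hb.2 h1
      rw [← hVaRb]
      exact le_csSup hbdd (mem_image_of_mem (fun ν => VaR ν α) (tp_mem ⟨hb.1, lt_trans hb.2 h1⟩))
end

section
/- (Modified Schwarz inequality, monotone case.) Let H : [a,b] → ℝ be nondecreasing and continuous at a and at b, let H̄ be the greatest convex minorant of H on [a,b] (with H̄(a) = H(a), H̄(b) = H(b)), and let h̄ denote the right-hand derivative of H̄. Then for every nondecreasing function x : [a,b] → ℝ for which both integrals exist and are finite, ∫_a^b x(t) dH(t) ≤ ∫_a^b x(t) h̄(t) dt, where the left side is the Lebesgue–Stieltjes integral with respect to H. -/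
open MeasureTheory Set Filter Topology

/-- The right-hand derivative of a real function. -/
noncomputable def rD (f : ℝ → ℝ) (x : ℝ) : ℝ := derivWithin f (Ioi x) x

/-- The greatest convex minorant of `H` on `[a, b]`: the pointwise supremum of all
functions convex on `[a, b]` lying below `H` on `[a, b]`. -/
noncomputable def gcm (a b : ℝ) (H : ℝ → ℝ) (t : ℝ) : ℝ :=
  sSup {y : ℝ | ∃ g : ℝ → ℝ,
    ConvexOn ℝ (Icc a b) g ∧ (∀ s ∈ Icc a b, g s ≤ H s) ∧ y = g t}

namespace ModSchwarz

variable {a b : ℝ} {H : ℝ → ℝ}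

lemma mset_nonempty (hH : Monotone H) (t : ℝ) :
    {y : ℝ | ∃ g : ℝ → ℝ,
      ConvexOn ℝ (Icc a b) g ∧ (∀ s ∈ Icc a b, g s ≤ H s) ∧ y = g t}.Nonempty :=
  ⟨H a, fun _ => H a, convexOn_const _ (convex_Icc a b), fun s hs => hH hs.1, rfl⟩

lemma mset_bddAbove (ht : t ∈ Icc a b) :
    BddAbove {y : ℝ | ∃ g : ℝ → ℝ,
      ConvexOn ℝ (Icc a b) g ∧ (∀ s ∈ Icc a b, g s ≤ H s) ∧ y = g t} :=
  ⟨H t, by rintro y ⟨g, _, hle, rfl⟩; exact hle t ht⟩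

lemma le_gcm {g : ℝ → ℝ} (hg : ConvexOn ℝ (Icc a b) g) (hle : ∀ s ∈ Icc a b, g s ≤ H s)
    {t : ℝ} (ht : t ∈ Icc a b) : g t ≤ gcm a b H t :=
  le_csSup (mset_bddAbove ht) ⟨g, hg, hle, rfl⟩

lemma gcm_le (hH : Monotone H) {t : ℝ} (ht : t ∈ Icc a b) : gcm a b H t ≤ H t :=
  csSup_le (mset_nonempty hH t) (by rintro y ⟨g, _, hle, rfl⟩; exact hle t ht)

lemma const_le_gcm (hH : Monotone H) {t : ℝ} (ht : t ∈ Icc a b) : H a ≤ gcm a b H t :=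
  le_gcm (convexOn_const _ (convex_Icc a b)) (fun s hs => hH hs.1) ht

lemma gcm_convexOn (hH : Monotone H) : ConvexOn ℝ (Icc a b) (gcm a b H) := by
  refine ⟨convex_Icc a b, fun u hu v hv c d hc hd hcd => ?_⟩
  refine csSup_le (mset_nonempty hH _) ?_
  rintro y ⟨g, hg, hle, rfl⟩
  have h1 : g (c • u + d • v) ≤ c * g u + d * g v := by
    simpa [smul_eq_mul] using hg.2 hu hv hc hd hcd
  have h2 : g u ≤ gcm a b H u := le_gcm hg hle hu
  have h3 : g v ≤ gcm a b H v := le_gcm hg hle hv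
  have := mul_le_mul_of_nonneg_left h2 hc
  have := mul_le_mul_of_nonneg_left h3 hd
  simp only [smul_eq_mul] at h1 ⊢
  linarith

lemma gcm_eq_a (hab : a ≤ b) (hH : Monotone H) : gcm a b H a = H a :=
  le_antisymm (gcm_le hH ⟨le_rfl, hab⟩) (const_le_gcm hH ⟨le_rfl, hab⟩)

lemma gcm_monotoneOn (hab : a ≤ b) (hH : Monotone H) : MonotoneOn (gcm a b H) (Icc a b) := by
  intro s hs t ht hst
  rcases eq_or_lt_of_le hs.1 with heq | has
  · rw [← heq, gcm_eq_a hab hH]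
    exact const_le_gcm hH ht
  rcases eq_or_lt_of_le hst with rfl | hst
  · exact le_rfl
  have hat : a < t := has.trans hst
  have hta : (0:ℝ) < t - a := by linarith
  have hc0 : 0 ≤ (t - s) / (t - a) := div_nonneg (by linarith) hta.le
  have hd0 : 0 < (s - a) / (t - a) := div_pos (by linarith) hta
  have hcd : (t - s) / (t - a) + (s - a) / (t - a) = 1 := by field_simp; ring
  have hcomb : ((t - s) / (t - a)) • a + ((s - a) / (t - a)) • t = s := by
    simp only [smul_eq_mul]; field_simp; ring
  have h1 := (gcm_convexOn hH (a := a) (b := b)).2 ⟨le_rfl, hab⟩ ht hc0 hd0.le hcd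
  rw [hcomb] at h1
  simp only [smul_eq_mul] at h1
  have h2 : H a ≤ gcm a b H s := const_le_gcm hH hs
  rw [gcm_eq_a hab hH] at h1
  have h4 : gcm a b H s ≤ (t - s) / (t - a) * gcm a b H s + (s - a) / (t - a) * gcm a b H t :=
    le_trans h1 (by linarith [mul_le_mul_of_nonneg_left h2 hc0])
  have h5 : (s - a) / (t - a) * gcm a b H s ≤ (s - a) / (t - a) * gcm a b H t := by
    have hsum : (t - s) / (t - a) = 1 - (s - a) / (t - a) := by linarith
    rw [hsum] at h4
    nlinarith [h4]
  exact le_of_mul_le_mul_left h5 hd0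

end ModSchwarz

section Work2
open MeasureTheory Set Filter Topology
namespace ModSchwarz

variable {a b : ℝ} {H : ℝ → ℝ}

/-- For every `δ > 0` there is a neighborhood of `b` on which `gcm ≥ H b - δ`. -/
lemma gcm_near_b (hab : a ≤ b) (hH : Monotone H) (hcb : ContinuousAt H b)
    {δ : ℝ} (hδ : 0 < δ) :
    ∃ η > 0, ∀ t ∈ Icc a b, b - η ≤ t → H b - δ ≤ gcm a b H t := by
  obtain ⟨ε, hε, hcond⟩ := Metric.continuousAt_iff.1 hcb (δ/2) (half_pos hδ)
  set ε' : ℝ := ε/2 with hε'def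
  have hε' : 0 < ε' := half_pos hε
  set M : ℝ := max 0 ((H b - δ/2 - H a)/ε') with hMdef
  have hM0 : 0 ≤ M := le_max_left _ _
  set g : ℝ → ℝ := fun t => max (H a) (H b - δ/2 + M*(t - b)) with hgdef
  have hgconv : ConvexOn ℝ (Icc a b) g := by
    refine ConvexOn.sup (convexOn_const _ (convex_Icc a b)) ?_
    refine ⟨convex_Icc a b, fun u _ v _ c d hc hd hcd => ?_⟩
    simp only [smul_eq_mul]
    have : c * (H b - δ/2 + M*(u - b)) + d * (H b - δ/2 + M*(v - b))
        - (H b - δ/2 + M*((c*u + d*v) - b)) = (c + d - 1) * (H b - δ/2 - M * b) := by ring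
    have h1 : c + d - 1 = 0 := by linarith
    rw [h1, zero_mul] at this
    linarith
  have hgle : ∀ s ∈ Icc a b, g s ≤ H s := by
    intro s hs
    refine max_le (hH hs.1) ?_
    rcases le_or_gt (b - ε') s with hcase | hcase
    · have hd : dist s b < ε := by
        rw [Real.dist_eq, abs_lt]
        constructor <;> [linarith [hs.2]; linarith [hs.2, hε]]
      have := hcond hd
      rw [Real.dist_eq, abs_lt] at this
      have hline : M*(s - b) ≤ 0 := mul_nonpos_of_nonneg_of_nonpos hM0 (by linarith [hs.2])
      linarith [this.1]
    · -- s < b - ε'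
      have hkey : H b - δ/2 - M * ε' ≤ H a := by
        rcases le_or_gt ((H b - δ/2 - H a)/ε') 0 with hle0 | hgt0
        · have hM : M = 0 := max_eq_left hle0
          have : H b - δ/2 - H a ≤ 0 := by
            have := mul_nonpos_of_nonpos_of_nonneg hle0 hε'.le
            rwa [div_mul_cancel₀ _ hε'.ne'] at this
          rw [hM]; linarith
        · have hM : M = (H b - δ/2 - H a)/ε' := max_eq_right hgt0.le
          rw [hM, div_mul_cancel₀ _ hε'.ne']; linarith
      have : M * (s - b) ≤ -(M * ε') := by
        have : M * (s - b) ≤ M * (-ε') := mul_le_mul_of_nonneg_left (by linarith) hM0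
        linarith [this]
      calc H b - δ/2 + M*(s - b) ≤ H b - δ/2 - M * ε' := by linarith
        _ ≤ H a := hkey
        _ ≤ H s := hH hs.1
  refine ⟨min ε' (δ/2/(M+1)), lt_min hε' (div_pos (half_pos hδ) (by linarith)), ?_⟩
  intro t ht hηt
  have hgt : g t ≤ gcm a b H t := le_gcm hgconv hgle ht
  have hMη : M * (δ/2/(M+1)) ≤ δ/2 := by
    rw [mul_div_assoc']
    rw [div_le_iff₀ (by linarith : (0:ℝ) < M + 1)]
    nlinarith
  have h1 : H b - δ/2 + M*(t - b) ≥ H b - δ := by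
    have hb1 : b - t ≤ δ/2/(M+1) := by
      have := min_le_right ε' (δ/2/(M+1)); linarith
    have : M * (b - t) ≤ M * (δ/2/(M+1)) := mul_le_mul_of_nonneg_left hb1 hM0
    have h2 : M * (t - b) ≥ -(δ/2) := by nlinarith
    linarith
  calc H b - δ ≤ H b - δ/2 + M*(t - b) := h1
    _ ≤ g t := le_max_right _ _
    _ ≤ gcm a b H t := hgt

lemma gcm_eq_b (hab : a ≤ b) (hH : Monotone H) (hcb : ContinuousAt H b) :
    gcm a b H b = H b := by
  refine le_antisymm (gcm_le hH ⟨hab, le_rfl⟩) ?_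
  refine le_of_forall_pos_le_add fun δ hδ => ?_
  obtain ⟨η, hη, hbound⟩ := gcm_near_b hab hH hcb hδ
  have := hbound b ⟨hab, le_rfl⟩ (by linarith)
  linarith

lemma gcm_continuousOn (hab : a < b) (hH : Monotone H) (hcb : ContinuousAt H b) :
    ContinuousOn (gcm a b H) (Icc a b) := by
  have hconv := gcm_convexOn (a := a) (b := b) hH
  have hmono := gcm_monotoneOn hab.le hH
  have hIoo : ContinuousOn (gcm a b H) (Ioo a b) :=
    (hconv.subset Ioo_subset_Icc_self (convex_Ioo a b)).continuousOn isOpen_Ioo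
  intro t ht
  rcases eq_or_lt_of_le ht.1 with rfl | hat
  · -- continuity at the left endpoint (here t = a)
    have hub : ∀ s ∈ Icc a b, gcm a b H s ≤
        gcm a b H a + (s - a)/(b - a) * (gcm a b H b - gcm a b H a) := by
      intro s hs
      have hbt : (0:ℝ) < b - a := by linarith
      have hc0 : 0 ≤ (b - s)/(b - a) := div_nonneg (by linarith [hs.2]) hbt.le
      have hd0 : 0 ≤ (s - a)/(b - a) := div_nonneg (by linarith [hs.1]) hbt.le
      have hcd : (b - s)/(b - a) + (s - a)/(b - a) = 1 := by field_simp; ring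
      have hcomb : ((b - s)/(b - a)) • a + ((s - a)/(b - a)) • b = s := by
        simp only [smul_eq_mul]; field_simp; ring
      have h1 := hconv.2 ⟨le_rfl, hab.le⟩ ⟨hab.le, le_rfl⟩ hc0 hd0 hcd
      rw [hcomb] at h1
      simp only [smul_eq_mul] at h1
      have : (b - s)/(b - a) = 1 - (s - a)/(b - a) := by linarith
      rw [this] at h1
      linarith [h1]
    have hlb : ∀ s ∈ Icc a b, gcm a b H a ≤ gcm a b H s :=
      fun s hs => hmono ⟨le_rfl, hab.le⟩ hs hs.1
    rw [ContinuousWithinAt]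
    refine tendsto_of_tendsto_of_tendsto_of_le_of_le'
      (g := fun _ => gcm a b H a)
      (h := fun s => gcm a b H a + (s - a)/(b - a) * (gcm a b H b - gcm a b H a))
      tendsto_const_nhds ?_ ?_ ?_
    · have : ContinuousAt (fun s : ℝ => gcm a b H a + (s - a)/(b - a) * (gcm a b H b - gcm a b H a)) a := by
        fun_prop
      have h2 := this.tendsto.mono_left (nhdsWithin_le_nhds (s := Icc a b))
      simpa using h2
    · exact eventually_nhdsWithin_of_forall hlb
    · exact eventually_nhdsWithin_of_forall hub
  rcases eq_or_lt_of_le ht.2 with heqb | htb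
  · -- continuity at the right endpoint (here t = b)
    subst heqb
    rw [ContinuousWithinAt]
    rw [gcm_eq_b hab.le hH hcb]
    refine tendsto_order.2 ⟨fun l hl => ?_, fun m hm => ?_⟩
    · obtain ⟨η, hη, hbound⟩ := gcm_near_b hab.le hH hcb (show (0:ℝ) < (H t - l)/2 by linarith)
      have hmem : Ioi (t - η) ∈ 𝓝 t := Ioi_mem_nhds (by linarith)
      filter_upwards [mem_nhdsWithin_of_mem_nhds hmem, self_mem_nhdsWithin] with s h1 h2
      have := hbound s h2 (le_of_lt h1)
      have h3 : H t - (H t - l)/2 > l := by linarith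
      linarith
    · filter_upwards [self_mem_nhdsWithin] with s hs
      have h4 : gcm a t H s ≤ gcm a t H t := hmono hs ht hs.2
      calc gcm a t H s ≤ gcm a t H t := h4
        _ = H t := gcm_eq_b hab.le hH hcb
        _ < m := hm
  · exact (hIoo.continuousAt (Ioo_mem_nhds hat htb)).continuousWithinAt

end ModSchwarz
end Work2

section Work3
open MeasureTheory Set Filter Topology
namespace ModSchwarz

variable {a b : ℝ} {H : ℝ → ℝ}

lemma slope_nonneg (hab : a ≤ b) (hH : Monotone H) {t s : ℝ} (ht : t ∈ Icc a b)
    (hs : s ∈ Icc a b) (hts : t < s) : 0 ≤ slope (gcm a b H) t s := by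
  rw [slope_def_field]
  exact div_nonneg (sub_nonneg.2 (gcm_monotoneOn hab hH ht hs hts.le)) (by linarith)

lemma slope_monoOn (hH : Monotone H) {t : ℝ} (ht : t ∈ Icc a b) :
    MonotoneOn (slope (gcm a b H) t) (Icc a b \ {t}) :=
  (gcm_convexOn hH).slope_mono ht

lemma gcm_hasRD_aux (hab : a ≤ b) (hH : Monotone H) {t : ℝ} (ht : t ∈ Ioo a b) :
    HasDerivWithinAt (gcm a b H) (sInf (slope (gcm a b H) t '' Ioo t b)) (Ioi t) t := by
  have hne : (Ioo t b).Nonempty := nonempty_Ioo.2 ht.2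
  have hsub : Ioo t b ⊆ Icc a b \ {t} := fun s hs =>
    ⟨⟨(ht.1.trans hs.1).le, hs.2.le⟩, ne_of_gt hs.1⟩
  have hmono : MonotoneOn (slope (gcm a b H) t) (Ioo t b) :=
    (slope_monoOn hH ⟨ht.1.le, ht.2.le⟩).mono hsub
  have hbdd : BddBelow (slope (gcm a b H) t '' Ioo t b) := by
    refine ⟨0, ?_⟩
    rintro y ⟨s, hs, rfl⟩
    exact slope_nonneg hab hH ⟨ht.1.le, ht.2.le⟩ ⟨(ht.1.trans hs.1).le, hs.2.le⟩ hs.1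
  have htd := MonotoneOn.tendsto_nhdsWithin_Ioo_right hne hmono hbdd
  rw [hasDerivWithinAt_iff_tendsto_slope]
  rwa [diff_singleton_eq_self (notMem_Ioi.2 le_rfl)]

lemma rD_gcm_eq (hab : a ≤ b) (hH : Monotone H) {t : ℝ} (ht : t ∈ Ioo a b) :
    rD (gcm a b H) t = sInf (slope (gcm a b H) t '' Ioo t b) :=
  (gcm_hasRD_aux hab hH ht).derivWithin (uniqueDiffWithinAt_Ioi t)

lemma gcm_hasRD (hab : a ≤ b) (hH : Monotone H) {t : ℝ} (ht : t ∈ Ioo a b) :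
    HasDerivWithinAt (gcm a b H) (rD (gcm a b H) t) (Ioi t) t := by
  rw [rD_gcm_eq hab hH ht]; exact gcm_hasRD_aux hab hH ht

lemma rD_gcm_nonneg (hab : a ≤ b) (hH : Monotone H) {t : ℝ} (ht : t ∈ Ioo a b) :
    0 ≤ rD (gcm a b H) t := by
  rw [rD_gcm_eq hab hH ht]
  refine le_csInf ((nonempty_Ioo.2 ht.2).image _) ?_
  rintro y ⟨s, hs, rfl⟩
  exact slope_nonneg hab hH ⟨ht.1.le, ht.2.le⟩ ⟨(ht.1.trans hs.1).le, hs.2.le⟩ hs.1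

lemma rD_gcm_mono (hab : a ≤ b) (hH : Monotone H) :
    MonotoneOn (rD (gcm a b H)) (Ioo a b) := by
  intro s hs t ht hst
  rcases eq_or_lt_of_le hst with rfl | hst
  · exact le_rfl
  have hbdd : BddBelow (slope (gcm a b H) s '' Ioo s b) := by
    refine ⟨0, ?_⟩
    rintro y ⟨r, hr, rfl⟩
    exact slope_nonneg hab hH ⟨hs.1.le, hs.2.le⟩ ⟨(hs.1.trans hr.1).le, hr.2.le⟩ hr.1
  have h1 : rD (gcm a b H) s ≤ slope (gcm a b H) s t := by
    rw [rD_gcm_eq hab hH hs]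
    exact csInf_le hbdd ⟨t, ⟨hst, ht.2⟩, rfl⟩
  have h2 : slope (gcm a b H) s t ≤ rD (gcm a b H) t := by
    rw [rD_gcm_eq hab hH ht]
    refine le_csInf ((nonempty_Ioo.2 ht.2).image _) ?_
    rintro y ⟨r, hr, rfl⟩
    rw [slope_comm]
    exact slope_monoOn hH ⟨ht.1.le, ht.2.le⟩
      ⟨⟨hs.1.le, hs.2.le⟩, ne_of_lt hst⟩
      ⟨⟨(ht.1.trans hr.1).le, hr.2.le⟩, ne_of_gt hr.1⟩ (hst.le.trans hr.1.le)
  exact h1.trans h2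

lemma gcm_ftc (hab : a < b) (hH : Monotone H) (hcb : ContinuousAt H b)
    {u v : ℝ} (hau : a < u) (huv : u ≤ v) (hvb : v < b) :
    ∫ s in Ioc u v, rD (gcm a b H) s = gcm a b H v - gcm a b H u := by
  have hsub : Icc u v ⊆ Ioo a b := fun s hs => ⟨hau.trans_le hs.1, hs.2.trans_lt hvb⟩
  have hint : IntervalIntegrable (rD (gcm a b H)) volume u v := by
    apply MonotoneOn.intervalIntegrable
    rw [uIcc_of_le huv]
    exact (rD_gcm_mono hab.le hH).mono hsub
  have h := intervalIntegral.integral_eq_sub_of_hasDeriv_right_of_le huv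
    ((gcm_continuousOn hab hH hcb).mono
      (Icc_subset_Icc (hau.le) (hvb.le)))
    (fun s hs => gcm_hasRD hab.le hH (hsub ⟨hs.1.le, hs.2.le⟩)) hint
  rw [← h, intervalIntegral.integral_of_le huv]

end ModSchwarz
end Work3

section Work4
open MeasureTheory Set Filter Topology
namespace ModSchwarz

variable {a b : ℝ} {H : ℝ → ℝ}

lemma lint_small (hab : a < b) (hH : Monotone H) (hcb : ContinuousAt H b)
    {u v : ℝ} (hau : a < u) (huv : u ≤ v) (hvb : v < b) :
    (volume.withDensity fun s => ENNReal.ofReal (rD (gcm a b H) s)) (Ioc u v)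
      = ENNReal.ofReal (gcm a b H v - gcm a b H u) := by
  rw [withDensity_apply _ measurableSet_Ioc]
  have hsub : Icc u v ⊆ Ioo a b := fun s hs => ⟨hau.trans_le hs.1, hs.2.trans_lt hvb⟩
  have hint : IntegrableOn (rD (gcm a b H)) (Ioc u v) volume := by
    rw [← intervalIntegrable_iff_integrableOn_Ioc_of_le huv]
    apply MonotoneOn.intervalIntegrable
    rw [uIcc_of_le huv]
    exact (rD_gcm_mono hab.le hH).mono hsub
  have hnn : 0 ≤ᵐ[volume.restrict (Ioc u v)] rD (gcm a b H) := by
    rw [EventuallyLE, ae_restrict_iff' measurableSet_Ioc]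
    exact ae_of_all _ fun s hs => rD_gcm_nonneg hab.le hH (hsub ⟨hs.1.le, hs.2⟩)
  rw [← ofReal_integral_eq_lintegral_ofReal hint hnn, gcm_ftc hab hH hcb hau huv hvb]

lemma lint_Ioc (hab : a < b) (hH : Monotone H) (hcb : ContinuousAt H b)
    {u v : ℝ} (hau : a ≤ u) (huv : u ≤ v) (hvb : v ≤ b) :
    (volume.withDensity fun s => ENNReal.ofReal (rD (gcm a b H) s)) (Ioc u v)
      = ENNReal.ofReal (gcm a b H v - gcm a b H u) := by
  set ρm := volume.withDensity fun s => ENNReal.ofReal (rD (gcm a b H) s) with hρm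
  rcases eq_or_lt_of_le huv with rfl | huv'
  · simp
  set w : ℕ → ℝ := fun n => u + (v - u)/((n:ℝ) + 2) with hw
  set z : ℕ → ℝ := fun n => v - (v - u)/((n:ℝ) + 2) with hz
  have hd0 : ∀ n : ℕ, 0 < (v - u)/((n:ℝ) + 2) := fun n => div_pos (by linarith) (by positivity)
  have hdhalf : ∀ n : ℕ, (v - u)/((n:ℝ) + 2) ≤ (v - u)/2 := by
    intro n
    gcongr
    · linarith
  have hwz : ∀ n, w n ≤ z n := by intro n; simp only [hw, hz]; linarith [hdhalf n]
  have hmonoSet : Monotone fun n => Ioc (w n) (z n) := by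
    intro m n hmn
    have hcast : ((m:ℝ) + 2) ≤ ((n:ℝ) + 2) := by
      have := Nat.cast_le (α := ℝ).2 hmn; linarith
    have hdmn : (v - u)/((n:ℝ)+2) ≤ (v - u)/((m:ℝ)+2) :=
      div_le_div_of_nonneg_left (by linarith) (by positivity) hcast
    apply Ioc_subset_Ioc
    · simp only [hw]; linarith
    · simp only [hz]; linarith
  have hUnion : (⋃ n, Ioc (w n) (z n)) = Ioo u v := by
    ext t
    simp only [mem_iUnion, mem_Ioc, mem_Ioo]
    constructor
    · rintro ⟨n, h1, h2⟩
      exact ⟨lt_trans (by simp only [hw]; linarith [hd0 n]) h1,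
        lt_of_le_of_lt h2 (by simp only [hz]; linarith [hd0 n])⟩
    · rintro ⟨h1, h2⟩
      set m := min (t - u) (v - t) with hm
      have hm0 : 0 < m := lt_min (by linarith) (by linarith)
      obtain ⟨n, hn⟩ := exists_nat_gt ((v - u)/m)
      refine ⟨n, ?_, ?_⟩
      · have : (v - u)/((n:ℝ)+2) < m := by
          rw [div_lt_iff₀ (by positivity)]
          rw [div_lt_iff₀ hm0] at hn
          nlinarith [hm0]
        have hmle : m ≤ t - u := min_le_left _ _
        simp only [hw]; linarith
      · have : (v - u)/((n:ℝ)+2) < m := by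
          rw [div_lt_iff₀ (by positivity)]
          rw [div_lt_iff₀ hm0] at hn
          nlinarith [hm0]
        have hmle : m ≤ v - t := min_le_right _ _
        simp only [hz]; linarith
  have hawn : ∀ n, a < w n := fun n => by
    simp only [hw]; linarith [hd0 n, hau]
  have hznb : ∀ n, z n < b := fun n => by
    simp only [hz]; linarith [hd0 n, hvb]
  have hwIcc : ∀ n, w n ∈ Icc a b := fun n =>
    ⟨(hawn n).le, le_trans ((hwz n).trans (hznb n).le) le_rfl⟩
  have hzIcc : ∀ n, z n ∈ Icc a b := fun n => ⟨((hawn n).trans_le (hwz n)).le, (hznb n).le⟩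
  have hmeas_n : ∀ n, ρm (Ioc (w n) (z n))
      = ENNReal.ofReal (gcm a b H (z n) - gcm a b H (w n)) := fun n =>
    lint_small hab hH hcb (hawn n) (hwz n) (hznb n)
  have hdlim : Tendsto (fun n : ℕ => (v - u)/((n:ℝ)+2)) atTop (𝓝 0) :=
    Tendsto.div_atTop tendsto_const_nhds
      (tendsto_atTop_add_const_right atTop 2 tendsto_natCast_atTop_atTop)
  have hwlim : Tendsto w atTop (𝓝 u) := by
    have := tendsto_const_nhds (f := atTop (α := ℕ)) (x := u) |>.add hdlim
    simpa using this
  have hzlim : Tendsto z atTop (𝓝 v) := by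
    have := tendsto_const_nhds (f := atTop (α := ℕ)) (x := v) |>.sub hdlim
    simpa using this
  have hcont := gcm_continuousOn hab hH hcb
  have hGw : Tendsto (fun n => gcm a b H (w n)) atTop (𝓝 (gcm a b H u)) := by
    have h1 : Tendsto w atTop (𝓝[Icc a b] u) :=
      tendsto_nhdsWithin_iff.2 ⟨hwlim, Eventually.of_forall hwIcc⟩
    exact (hcont u ⟨hau, huv.trans hvb⟩).tendsto.comp h1
  have hGz : Tendsto (fun n => gcm a b H (z n)) atTop (𝓝 (gcm a b H v)) := by
    have h1 : Tendsto z atTop (𝓝[Icc a b] v) :=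
      tendsto_nhdsWithin_iff.2 ⟨hzlim, Eventually.of_forall hzIcc⟩
    exact (hcont v ⟨hau.trans huv, hvb⟩).tendsto.comp h1
  have hlim2 : Tendsto (fun n => ENNReal.ofReal (gcm a b H (z n) - gcm a b H (w n))) atTop
      (𝓝 (ENNReal.ofReal (gcm a b H v - gcm a b H u))) :=
    (ENNReal.continuous_ofReal.tendsto _).comp (hGz.sub hGw)
  have hlim1 := tendsto_measure_iUnion_atTop (μ := ρm) hmonoSet
  rw [hUnion] at hlim1
  have hlim1' : Tendsto (fun n => ENNReal.ofReal (gcm a b H (z n) - gcm a b H (w n))) atTop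
      (𝓝 (ρm (Ioo u v))) := by
    refine hlim1.congr fun n => ?_
    exact hmeas_n n
  have hIoo : ρm (Ioo u v) = ENNReal.ofReal (gcm a b H v - gcm a b H u) :=
    tendsto_nhds_unique hlim1' hlim2
  have hsing : ρm {v} = 0 :=
    (withDensity_absolutelyContinuous volume _) (by simp)
  have hle : ρm (Ioc u v) ≤ ρm (Ioo u v) := by
    rw [← Ioo_union_right huv']
    exact le_trans (measure_union_le _ _) (by rw [hsing, add_zero])
  refine le_antisymm (hle.trans_eq hIoo) ?_
  rw [← hIoo]
  exact measure_mono Ioo_subset_Ioc_self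

end ModSchwarz
end Work4

section Work5
open MeasureTheory Set Filter Topology
namespace ModSchwarz

variable {a b : ℝ} {H : ℝ → ℝ}

/-- Monotone continuous extension of `gcm` to all of `ℝ`. -/
noncomputable def gext (a b : ℝ) (H : ℝ → ℝ) : ℝ → ℝ := fun t => gcm a b H (max a (min t b))

lemma clamp_mem (hab : a ≤ b) (t : ℝ) : max a (min t b) ∈ Icc a b :=
  ⟨le_max_left _ _, max_le hab (min_le_right _ _)⟩

lemma gext_mono (hab : a ≤ b) (hH : Monotone H) : Monotone (gext a b H) := by
  intro s t hst
  exact gcm_monotoneOn hab hH (clamp_mem hab s) (clamp_mem hab t)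
    (max_le_max le_rfl (min_le_min_right _ hst))

lemma gext_eq (hab : a ≤ b) {t : ℝ} (ht : t ∈ Icc a b) : gext a b H t = gcm a b H t := by
  unfold gext
  rw [min_eq_left ht.2, max_eq_right ht.1]

lemma gext_continuous (hab : a < b) (hH : Monotone H) (hcb : ContinuousAt H b) :
    Continuous (gext a b H) := by
  have hclamp : Continuous fun t : ℝ => max a (min t b) :=
    continuous_const.max (continuous_id.min continuous_const)
  exact (gcm_continuousOn hab hH hcb).comp_continuous hclamp (clamp_mem hab.le)

lemma gext_stieltjes_eq (hab : a < b) (hH : Monotone H) (hcb : ContinuousAt H b) (t : ℝ) :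
    (gext_mono hab.le hH).stieltjesFunction t = gext a b H t := by
  rw [Monotone.stieltjesFunction_eq]
  exact rightLim_eq_of_tendsto
    (((gext_continuous hab hH hcb).tendsto t).mono_left nhdsWithin_le_nhds)

lemma gext_measure_Ioc (hab : a < b) (hH : Monotone H) (hcb : ContinuousAt H b) (u v : ℝ) :
    (gext_mono hab.le hH).stieltjesFunction.measure (Ioc u v)
      = ENNReal.ofReal (gext a b H v - gext a b H u) := by
  rw [StieltjesFunction.measure_Ioc, gext_stieltjes_eq hab hH hcb,
    gext_stieltjes_eq hab hH hcb]

/-- The Stieltjes measure of the extended minorant agrees with the density measure of its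
right derivative on `(a, b]`. -/
lemma gext_measure_eq_withDensity (hab : a < b) (hH : Monotone H) (hcb : ContinuousAt H b) :
    (gext_mono hab.le hH).stieltjesFunction.measure.restrict (Ioc a b)
      = (volume.withDensity fun s => ENNReal.ofReal (rD (gcm a b H) s)).restrict (Ioc a b) := by
  refine Measure.ext_of_Ioc' _ _ (fun u v _ => ?_) (fun u v _ => ?_)
  · rw [Measure.restrict_apply measurableSet_Ioc]
    refine ne_of_lt (lt_of_le_of_lt (measure_mono inter_subset_left) ?_)
    rw [gext_measure_Ioc hab hH hcb]
    exact ENNReal.ofReal_lt_top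
  · rw [Measure.restrict_apply measurableSet_Ioc, Measure.restrict_apply measurableSet_Ioc,
      Ioc_inter_Ioc]
    rcases le_or_gt (u ⊔ a) (v ⊓ b) with hle | hlt
    · have h1 : u ⊔ a ∈ Icc a b := ⟨le_sup_right, hle.trans inf_le_right⟩
      have h2 : v ⊓ b ∈ Icc a b := ⟨le_trans le_sup_right hle, inf_le_right⟩
      rw [gext_measure_Ioc hab hH hcb, gext_eq hab.le h1, gext_eq hab.le h2,
        lint_Ioc hab hH hcb h1.1 hle h2.2]
    · rw [Ioc_eq_empty (not_lt.2 hlt.le)]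
      simp

end ModSchwarz
end Work5

section Work6
open MeasureTheory Set Filter Topology
namespace ModSchwarz

variable {a b : ℝ} {H : ℝ → ℝ}

lemma stieltjes_eq_of_continuousAt (hH : Monotone H) {t : ℝ} (hct : ContinuousAt H t) :
    hH.stieltjesFunction t = H t := by
  rw [Monotone.stieltjesFunction_eq]
  exact rightLim_eq_of_tendsto
    (hct.tendsto.mono_left nhdsWithin_le_nhds)

lemma gcm_le_stieltjes (hab : a ≤ b) (hH : Monotone H) {t : ℝ} (ht : t ∈ Icc a b) :
    gcm a b H t ≤ hH.stieltjesFunction t :=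
  le_trans (gcm_le hH ht) (by rw [Monotone.stieltjesFunction_eq]; exact hH.le_rightLim le_rfl)

/-- Core comparison: on upward-closed subsets of `(a, b]`, the Stieltjes measure of `H` is
dominated by that of the extended convex minorant. -/
lemma measure_upward_le (hab : a < b) (hH : Monotone H)
    (hca : ContinuousAt H a) (hcb : ContinuousAt H b)
    {p : Set ℝ} (hpsub : p ⊆ Ioc a b)
    (hupward : ∀ s ∈ p, ∀ s' ∈ Ioc a b, s ≤ s' → s' ∈ p) :
    hH.stieltjesFunction.measure p ≤ (gext_mono hab.le hH).stieltjesFunction.measure p := by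
  set μH := hH.stieltjesFunction.measure with hμH
  set μG := (gext_mono hab.le hH).stieltjesFunction.measure with hμG
  rcases eq_empty_or_nonempty p with rfl | hne
  · simp
  set c0 := sInf p with hc0
  have hbdd : BddBelow p := ⟨a, fun s hs => (hpsub hs).1.le⟩
  obtain ⟨s0, hs0⟩ := hne
  have hc0b : c0 ≤ b := (csInf_le hbdd hs0).trans (hpsub hs0).2
  have hac0 : a ≤ c0 := le_csInf ⟨s0, hs0⟩ fun s hs => (hpsub hs).1.le
  have hIocsub : Ioc c0 b ⊆ p := by
    intro s hs
    obtain ⟨w, hw, hws⟩ := exists_lt_of_csInf_lt ⟨s0, hs0⟩ hs.1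
    exact hupward w hw s ⟨lt_trans (hpsub hw).1 hws, hs.2⟩ hws.le
  have h2 : μG (Ioc c0 b) ≤ μG p := measure_mono hIocsub
  have h3 : μG (Ioc c0 b) = ENNReal.ofReal (gcm a b H b - gcm a b H c0) := by
    rw [hμG, gext_measure_Ioc hab hH hcb, gext_eq hab.le ⟨hab.le, le_rfl⟩,
      gext_eq hab.le ⟨hac0, hc0b⟩]
  have h4 : μH p ≤ ENNReal.ofReal (H b - gcm a b H c0) := by
    rcases eq_or_lt_of_le hac0 with heq | hgt
    · calc μH p ≤ μH (Ioc a b) := measure_mono hpsub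
        _ = ENNReal.ofReal (hH.stieltjesFunction b - hH.stieltjesFunction a) :=
            StieltjesFunction.measure_Ioc _ _ _
        _ = ENNReal.ofReal (H b - H a) := by
            rw [stieltjes_eq_of_continuousAt hH hca, stieltjes_eq_of_continuousAt hH hcb]
        _ ≤ ENNReal.ofReal (H b - gcm a b H c0) := by
            apply ENNReal.ofReal_le_ofReal
            have : gcm a b H c0 ≤ H c0 := gcm_le hH ⟨hac0, hc0b⟩
            rw [← heq] at this ⊢
            have h5 := gcm_eq_a hab.le hH
            linarith [le_of_eq h5.symm, gcm_le hH (⟨le_rfl, hab.le⟩ : a ∈ Icc a b),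
              const_le_gcm hH (⟨le_rfl, hab.le⟩ : a ∈ Icc a b)]
    · -- a < c0 : approximate from the left
      set w : ℕ → ℝ := fun n => c0 - (c0 - a)/((n:ℝ) + 2) with hwdef
      have hd0 : ∀ n : ℕ, 0 < (c0 - a)/((n:ℝ) + 2) := fun n => div_pos (by linarith) (by positivity)
      have hdle : ∀ n : ℕ, (c0 - a)/((n:ℝ) + 2) ≤ (c0 - a)/2 := fun n =>
        div_le_div_of_nonneg_left (by linarith) (by norm_num)
          (by linarith [Nat.cast_nonneg (α := ℝ) n])
      have hwa : ∀ n, a < w n := fun n => by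
        simp only [hwdef]; linarith [hdle n]
      have hwc : ∀ n, w n < c0 := fun n => by
        simp only [hwdef]; linarith [hd0 n]
      have hwIcc : ∀ n, w n ∈ Icc a b := fun n => ⟨(hwa n).le, ((hwc n).trans_le hc0b).le⟩
      have hbound : ∀ n, μH p ≤ ENNReal.ofReal (H b - gcm a b H (w n)) := by
        intro n
        have hsubn : p ⊆ Ioc (w n) b := fun s hs =>
          ⟨(hwc n).trans_le (csInf_le hbdd hs), (hpsub hs).2⟩
        calc μH p ≤ μH (Ioc (w n) b) := measure_mono hsubn
          _ = ENNReal.ofReal (hH.stieltjesFunction b - hH.stieltjesFunction (w n)) :=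
              StieltjesFunction.measure_Ioc _ _ _
          _ ≤ ENNReal.ofReal (H b - gcm a b H (w n)) := by
              apply ENNReal.ofReal_le_ofReal
              have h5 := stieltjes_eq_of_continuousAt hH hcb
              have h6 := gcm_le_stieltjes hab.le hH (hwIcc n)
              linarith
      have hdlim : Tendsto (fun n : ℕ => (c0 - a)/((n:ℝ)+2)) atTop (𝓝 0) :=
        Tendsto.div_atTop tendsto_const_nhds
          (tendsto_atTop_add_const_right atTop 2 tendsto_natCast_atTop_atTop)
      have hwlim : Tendsto w atTop (𝓝 c0) := by
        have := tendsto_const_nhds (f := atTop (α := ℕ)) (x := c0) |>.sub hdlim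
        simpa using this
      have hGw : Tendsto (fun n => gcm a b H (w n)) atTop (𝓝 (gcm a b H c0)) := by
        have h1 : Tendsto w atTop (𝓝[Icc a b] c0) :=
          tendsto_nhdsWithin_iff.2 ⟨hwlim, Eventually.of_forall hwIcc⟩
        exact ((gcm_continuousOn hab hH hcb) c0 ⟨hac0, hc0b⟩).tendsto.comp h1
      have hlim : Tendsto (fun n => ENNReal.ofReal (H b - gcm a b H (w n))) atTop
          (𝓝 (ENNReal.ofReal (H b - gcm a b H c0))) :=
        (ENNReal.continuous_ofReal.tendsto _).comp (tendsto_const_nhds.sub hGw)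
      exact ge_of_tendsto' hlim hbound
  calc μH p ≤ ENNReal.ofReal (H b - gcm a b H c0) := h4
    _ = ENNReal.ofReal (gcm a b H b - gcm a b H c0) := by
        rw [gcm_eq_b hab.le hH hcb]
    _ = μG (Ioc c0 b) := h3.symm
    _ ≤ μG p := h2

end ModSchwarz
end Work6

open MeasureTheory Set Filter Topology
open scoped ENNReal NNReal

/-- Modified Schwarz inequality of Moriguti (Lemma 4.2), monotone case: for a nondecreasing
`H` continuous at the endpoints `a`, `b`, and any nondecreasing `x` with finite integrals,
`∫_a^b x dH ≤ ∫_a^b x(t) h̄(t) dt`, where `h̄` is the right derivative of the greatest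
convex minorant of `H` on `[a, b]`, and the left side is the Lebesgue–Stieltjes integral. -/
theorem modified_schwarz_inequality (a b : ℝ) (hab : a ≤ b) (H : ℝ → ℝ) (hH : Monotone H)
    (hca : ContinuousAt H a) (hcb : ContinuousAt H b)
    (x : ℝ → ℝ) (hx : MonotoneOn x (Icc a b))
    (hint1 : IntegrableOn x (Ioc a b) hH.stieltjesFunction.measure)
    (hint2 : IntegrableOn (fun t => x t * rD (gcm a b H) t) (Ioc a b) volume) :
    ∫ t in Ioc a b, x t ∂hH.stieltjesFunction.measure
      ≤ ∫ t in Ioc a b, x t * rD (gcm a b H) t := by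
  rcases eq_or_lt_of_le hab with rfl | hab'
  · simp [Ioc_self]
  clear hint2
  set μH := hH.stieltjesFunction.measure with hμHdef
  set μG := (ModSchwarz.gext_mono hab'.le hH).stieltjesFunction.measure with hμGdef
  -- the clamped version of x
  set xe : ℝ → ℝ := fun t => x (max a (min t b)) with hxedef
  have hxeM : Monotone xe := fun s t hst =>
    hx (ModSchwarz.clamp_mem hab s) (ModSchwarz.clamp_mem hab t)
      (max_le_max le_rfl (min_le_min_right _ hst))
  have hxe_eq : ∀ t ∈ Icc a b, xe t = x t := by
    intro t ht
    simp only [hxedef]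
    rw [min_eq_left ht.2, max_eq_right ht.1]
  have hxe_lb : ∀ s, x a ≤ xe s := fun s =>
    hx ⟨le_rfl, hab⟩ (ModSchwarz.clamp_mem hab s) (le_max_left _ _)
  have hxe_ub : ∀ s, xe s ≤ x b := fun s =>
    hx (ModSchwarz.clamp_mem hab s) ⟨hab, le_rfl⟩ (max_le hab (min_le_right _ _))
  set f : ℝ → ℝ := fun s => xe s - x a with hfdef
  have hfmeas : Measurable f := (hxeM.measurable).sub measurable_const
  -- finiteness
  have hμHIoc : μH (Ioc a b) = ENNReal.ofReal (H b - H a) := by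
    rw [hμHdef, StieltjesFunction.measure_Ioc,
      ModSchwarz.stieltjes_eq_of_continuousAt hH hca,
      ModSchwarz.stieltjes_eq_of_continuousAt hH hcb]
  have hμGIoc : μG (Ioc a b) = ENNReal.ofReal (H b - H a) := by
    rw [hμGdef, ModSchwarz.gext_measure_Ioc hab' hH hcb,
      ModSchwarz.gext_eq hab'.le ⟨le_rfl, hab⟩, ModSchwarz.gext_eq hab'.le ⟨hab, le_rfl⟩,
      ModSchwarz.gcm_eq_a hab'.le hH, ModSchwarz.gcm_eq_b hab'.le hH hcb]
  haveI hfinH : IsFiniteMeasure (μH.restrict (Ioc a b)) := by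
    constructor
    rw [Measure.restrict_apply_univ, hμHIoc]
    exact ENNReal.ofReal_lt_top
  haveI hfinG : IsFiniteMeasure (μG.restrict (Ioc a b)) := by
    constructor
    rw [Measure.restrict_apply_univ, hμGIoc]
    exact ENNReal.ofReal_lt_top
  -- pointwise comparison of level-set measures
  have key : ∀ t : ℝ, (μH.restrict (Ioc a b)) {s | t < f s}
      ≤ (μG.restrict (Ioc a b)) {s | t < f s} := by
    intro t
    have hms : MeasurableSet {s | t < f s} := measurableSet_lt measurable_const hfmeas
    rw [Measure.restrict_apply hms, Measure.restrict_apply hms]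
    refine ModSchwarz.measure_upward_le hab' hH hca hcb inter_subset_right ?_
    rintro s ⟨hs1, _⟩ s' hs' hss'
    refine ⟨?_, hs'⟩
    show t < f s'
    have h7 : t < f s := hs1
    have h8 := hxeM hss'
    simp only [hfdef] at h7 ⊢
    linarith
  -- nonnegativity of f on (a, b]
  have hnnH : 0 ≤ᵐ[μH.restrict (Ioc a b)] f := by
    rw [EventuallyLE, ae_restrict_iff' measurableSet_Ioc]
    refine ae_of_all _ fun s _ => ?_
    simp only [hfdef, Pi.zero_apply]
    linarith [hxe_lb s]
  have hnnG : 0 ≤ᵐ[μG.restrict (Ioc a b)] f := by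
    rw [EventuallyLE, ae_restrict_iff' measurableSet_Ioc]
    refine ae_of_all _ fun s _ => ?_
    simp only [hfdef, Pi.zero_apply]
    linarith [hxe_lb s]
  -- layer cake comparison
  have hLALB : ∫⁻ s, ENNReal.ofReal (f s) ∂(μH.restrict (Ioc a b))
      ≤ ∫⁻ s, ENNReal.ofReal (f s) ∂(μG.restrict (Ioc a b)) := by
    rw [lintegral_eq_lintegral_meas_lt _ hnnH hfmeas.aemeasurable,
      lintegral_eq_lintegral_meas_lt _ hnnG hfmeas.aemeasurable]
    exact lintegral_mono fun t => key t
  -- integrability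
  have hxeH : IntegrableOn xe (Ioc a b) μH :=
    hint1.congr_fun (fun s hs => (hxe_eq s ⟨hs.1.le, hs.2⟩).symm) measurableSet_Ioc
  have hfH : IntegrableOn f (Ioc a b) μH := hxeH.sub (integrable_const _)
  have hxeG : IntegrableOn xe (Ioc a b) μG := by
    refine Integrable.mono' (integrable_const (max |x a| |x b|))
      hxeM.measurable.aestronglyMeasurable (ae_of_all _ fun s => ?_)
    rw [Real.norm_eq_abs, abs_le]
    constructor
    · have := neg_abs_le (x a); have := hxe_lb s
      have : -(max |x a| |x b|) ≤ -|x a| := by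
        simp only [neg_le_neg_iff]; exact le_max_left _ _
      linarith [neg_abs_le (x a), hxe_lb s]
    · exact (hxe_ub s).trans ((le_abs_self _).trans (le_max_right _ _))
  have hfG : IntegrableOn f (Ioc a b) μG := hxeG.sub (integrable_const _)
  -- from lintegral comparison to integral comparison for f
  have hA := ofReal_integral_eq_lintegral_ofReal hfH hnnH
  have hB := ofReal_integral_eq_lintegral_ofReal hfG hnnG
  have hABle : ∫ s in Ioc a b, f s ∂μH ≤ ∫ s in Ioc a b, f s ∂μG := by
    have h1 : ENNReal.ofReal (∫ s in Ioc a b, f s ∂μH)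
        ≤ ENNReal.ofReal (∫ s in Ioc a b, f s ∂μG) := by
      rw [hA, hB]; exact hLALB
    exact (ENNReal.ofReal_le_ofReal_iff (integral_nonneg_of_ae hnnG)).1 h1
  -- comparison for xe
  have hxele : ∫ s in Ioc a b, xe s ∂μH ≤ ∫ s in Ioc a b, xe s ∂μG := by
    have e1 : ∫ s in Ioc a b, f s ∂μH
        = ∫ s in Ioc a b, xe s ∂μH - (μH (Ioc a b)).toReal * x a := by
      rw [hfdef]
      rw [integral_sub hxeH (integrable_const _), integral_const,
        measureReal_restrict_apply_univ, measureReal_def, smul_eq_mul]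
    have e2 : ∫ s in Ioc a b, f s ∂μG
        = ∫ s in Ioc a b, xe s ∂μG - (μG (Ioc a b)).toReal * x a := by
      rw [hfdef]
      rw [integral_sub hxeG (integrable_const _), integral_const,
        measureReal_restrict_apply_univ, measureReal_def, smul_eq_mul]
    rw [e1, e2, hμHIoc, hμGIoc] at hABle
    linarith
  -- identify the two sides of the goal
  have hLHS : ∫ t in Ioc a b, x t ∂μH = ∫ s in Ioc a b, xe s ∂μH :=
    setIntegral_congr_fun measurableSet_Ioc fun s hs => (hxe_eq s ⟨hs.1.le, hs.2⟩).symm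
  have hRHS : ∫ s in Ioc a b, xe s ∂μG = ∫ t in Ioc a b, x t * rD (gcm a b H) t := by
    have hmeq := ModSchwarz.gext_measure_eq_withDensity hab' hH hcb
    have hint_eq : ∫ s in Ioc a b, xe s ∂μG
        = ∫ s, xe s
          ∂((volume.withDensity fun s => ENNReal.ofReal (rD (gcm a b H) s)).restrict (Ioc a b)) := by
      show ∫ s, xe s ∂(μG.restrict (Ioc a b)) = _
      rw [hμGdef, hmeq]
    rw [hint_eq]
    have hden_eq : (fun s => ENNReal.ofReal (rD (gcm a b H) s))
        = fun s => ((rD (gcm a b H) s).toNNReal : ℝ≥0∞) := rfl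
    rw [hden_eq, restrict_withDensity measurableSet_Ioc]
    have hdmeas : Measurable fun s => (rD (gcm a b H) s).toNNReal := by
      have : Measurable fun s => derivWithin (gcm a b H) (Ioi s) s :=
        measurable_derivWithin_Ioi (gcm a b H)
      exact this.real_toNNReal
    rw [integral_withDensity_eq_integral_smul hdmeas]
    refine setIntegral_congr_ae measurableSet_Ioc ?_
    have hb0 : (volume : Measure ℝ) {b} = 0 := measure_singleton b
    filter_upwards [measure_eq_zero_iff_ae_notMem.1 hb0] with s hsb hs
    have hsIoo : s ∈ Ioo a b := ⟨hs.1, lt_of_le_of_ne hs.2 (by simpa using hsb)⟩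
    have hnn : 0 ≤ rD (gcm a b H) s := ModSchwarz.rD_gcm_nonneg hab'.le hH hsIoo
    rw [NNReal.smul_def, smul_eq_mul, Real.coe_toNNReal _ hnn,
      hxe_eq s ⟨hs.1.le, hs.2⟩, mul_comm]
  rw [hLHS, ← hRHS]
  exact hxele
end
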